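/- Let ψ : ℝⁿ → [0,∞) be measurable with e^{−tψ} ∈ L¹(ℝⁿ). Then p_t(0) := (2π)^{−n}∫ e^{−tψ} dξ satisfies the lower bound (2π)ⁿ p_t(0) ≥ e^{−1} λ({ξ : ψ(ξ) < 1/t}). If moreover there are constants γ₀ ≥ 1 and α ≥ 0 with λ({ψ < c²r²}) ≤ γ₀ c^α λ({ψ < r²}) for all c ≥ 1, r > 0, then also (2π)ⁿ p_t(0) ≤ κ₁ λ({ξ : ψ(ξ) < 1/t}) with κ₁ = 1 − e^{−1} + γ₀ ∫₁^∞ r^{α/2} e^{−r} dr; hence p_t(0) ≍ λ(B^{d_ψ}(0, 1/√t)). -/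

import Mathlib

open MeasureTheory Set

lemma image_exp_neg_Ioi_one : (fun r : ℝ => Real.exp (-r)) '' Set.Ioi 1 = Set.Ioo 0 (Real.exp (-1)) := by
  ext y
  constructor
  · rintro ⟨r, hr, rfl⟩
    exact ⟨Real.exp_pos _, Real.exp_lt_exp.2 (by simpa using hr)⟩
  · rintro ⟨h0, h1⟩
    refine ⟨-Real.log y, ?_, by simp [Real.exp_log h0]⟩
    simp only [Set.mem_Ioi]
    have := (Real.log_lt_iff_lt_exp h0).2 (by simpa using h1)
    linarith

lemma exp_neg_deriv (x : ℝ) (s : Set ℝ) :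
    HasDerivWithinAt (fun r : ℝ => Real.exp (-r)) (-Real.exp (-x)) s x := by
  have h := ((Real.hasDerivAt_exp (-x)).comp x (hasDerivAt_neg x)).hasDerivWithinAt (s := s)
  simpa [mul_comm, Function.comp_def] using h

lemma exp_neg_injOn : Set.InjOn (fun r : ℝ => Real.exp (-r)) (Set.Ioi 1) := by
  intro a _ b _ hab
  have := Real.exp_injective hab
  linarith

lemma aux_cov (α : ℝ) :
    (∫ s in Set.Ioo 0 (Real.exp (-1)), (-Real.log s) ^ (α/2)) =
      ∫ r in Set.Ioi (1:ℝ), r ^ (α/2) * Real.exp (-r) := by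
  rw [← image_exp_neg_Ioi_one,
    integral_image_eq_integral_abs_deriv_smul measurableSet_Ioi
      (fun x _ => exp_neg_deriv x _) exp_neg_injOn]
  refine setIntegral_congr_fun measurableSet_Ioi fun r hr => ?_
  rw [abs_neg, abs_of_nonneg (Real.exp_pos _).le]
  simp [smul_eq_mul, neg_neg, mul_comm]

lemma aux_intOn (α : ℝ) (hα : 0 ≤ α) :
    IntegrableOn (fun s : ℝ => (-Real.log s) ^ (α/2)) (Set.Ioo 0 (Real.exp (-1))) := by
  rw [← image_exp_neg_Ioi_one,
    integrableOn_image_iff_integrableOn_abs_deriv_smul measurableSet_Ioi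
      (fun x _ => exp_neg_deriv x _) exp_neg_injOn]
  have base : IntegrableOn (fun x : ℝ => Real.exp (-x) * x ^ (α/2)) (Set.Ioi 1) := by
    have := Real.GammaIntegral_convergent (s := α/2 + 1) (by positivity)
    simpa using this.mono_set (Set.Ioi_subset_Ioi zero_le_one)
  refine base.congr_fun (fun r hr => ?_) measurableSet_Ioi
  rw [abs_neg, abs_of_nonneg (Real.exp_pos _).le]
  simp [smul_eq_mul, neg_neg]

/-- Two-sided on-diagonal estimate. -/
theorem statement12 {n : ℕ} (ψ : EuclideanSpace ℝ (Fin n) → ℝ)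
    (hmeas : Measurable ψ) (hpos : ∀ ξ, 0 ≤ ψ ξ)
    (t : ℝ) (ht : 0 < t)
    (hint : Integrable (fun ξ : EuclideanSpace ℝ (Fin n) => Real.exp (-t * ψ ξ))) :
    (Real.exp (-1) * (volume {ξ : EuclideanSpace ℝ (Fin n) | ψ ξ < 1 / t}).toReal ≤
      ∫ ξ : EuclideanSpace ℝ (Fin n), Real.exp (-t * ψ ξ)) ∧
    (∀ γ₀ α : ℝ, 1 ≤ γ₀ → 0 ≤ α →
      (∀ c : ℝ, 1 ≤ c → ∀ r : ℝ, 0 < r →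
        volume {ξ : EuclideanSpace ℝ (Fin n) | ψ ξ < c ^ 2 * r ^ 2} ≤
          ENNReal.ofReal (γ₀ * c ^ α) *
            volume {ξ : EuclideanSpace ℝ (Fin n) | ψ ξ < r ^ 2}) →
      ∫ ξ : EuclideanSpace ℝ (Fin n), Real.exp (-t * ψ ξ) ≤
        (1 - Real.exp (-1) + γ₀ * ∫ r in Set.Ioi (1 : ℝ), r ^ (α / 2) * Real.exp (-r)) *
          (volume {ξ : EuclideanSpace ℝ (Fin n) | ψ ξ < 1 / t}).toReal) := by
  have he1 : (0:ℝ) < Real.exp (-1) := Real.exp_pos _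
  have he2 : Real.exp (-1) < 1 := by
    simpa using Real.exp_lt_exp.2 (by norm_num : (-1:ℝ) < 0)
  set S : Set (EuclideanSpace ℝ (Fin n)) := {ξ | ψ ξ < 1 / t} with hS
  set M : ENNReal := volume S with hM
  have hSm : MeasurableSet S := hmeas measurableSet_Iio
  -- on S, exp(-1) ≤ exp(-t ψ)
  have hexpS : ∀ ξ ∈ S, Real.exp (-1) ≤ Real.exp (-t * ψ ξ) := by
    intro ξ hξ
    apply Real.exp_le_exp.2
    have h1 : ψ ξ * t < 1 := by
      have := (lt_div_iff₀ ht).1 hξ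
      linarith
    nlinarith
  have hfin : M < ⊤ := by
    refine lt_of_le_of_lt (measure_mono ?_) (hint.measure_ge_lt_top he1)
    intro ξ hξ
    exact hexpS ξ hξ
  constructor
  · -- lower bound
    have key : Real.exp (-1) * M.toReal ≤ ∫ ξ in S, Real.exp (-t * ψ ξ) :=
      by
        have := setIntegral_ge_of_const_le hSm hfin.ne hexpS hint.integrableOn
        simpa [Measure.real, smul_eq_mul, mul_comm] using this
    exact key.trans (setIntegral_le_integral hint (ae_of_all _ fun ξ => (Real.exp_pos _).le))
  · intro γ₀ α hγ hα hdoub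
    set J : ℝ := ∫ r in Set.Ioi (1:ℝ), r ^ (α / 2) * Real.exp (-r) with hJ
    have hJ0 : 0 ≤ J :=
      setIntegral_nonneg measurableSet_Ioi fun r hr =>
        mul_nonneg (Real.rpow_nonneg (le_trans zero_le_one (le_of_lt hr)) _) (Real.exp_pos _).le
    have hκ0 : 0 ≤ 1 - Real.exp (-1) + γ₀ * J := by nlinarith
    have hmf : Measurable fun ξ : EuclideanSpace ℝ (Fin n) => Real.exp (-t * ψ ξ) :=
      Real.measurable_exp.comp (hmeas.const_mul (-t))
    have hrepr : ∫ ξ : EuclideanSpace ℝ (Fin n), Real.exp (-t * ψ ξ) =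
        (∫⁻ ξ, ENNReal.ofReal (Real.exp (-t * ψ ξ))).toReal :=
      integral_eq_lintegral_of_nonneg_ae (ae_of_all _ fun ξ => (Real.exp_pos _).le)
        hmf.aestronglyMeasurable
    have hlayer : (∫⁻ ξ, ENNReal.ofReal (Real.exp (-t * ψ ξ))) =
        ∫⁻ s in Set.Ioi (0:ℝ), volume {ξ | s < Real.exp (-t * ψ ξ)} :=
      lintegral_eq_lintegral_meas_lt _ (ae_of_all _ fun ξ => (Real.exp_pos _).le)
        hmf.aemeasurable
    -- split the domain
    have hsplit : Set.Ioi (0:ℝ) =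
        Set.Ioo 0 (Real.exp (-1)) ∪ (Set.Ico (Real.exp (-1)) 1 ∪ Set.Ici 1) := by
      ext x
      simp only [Set.mem_Ioi, Set.mem_union, Set.mem_Ioo, Set.mem_Ico, Set.mem_Ici]
      constructor
      · intro hx
        rcases lt_or_ge x (Real.exp (-1)) with h | h
        · exact Or.inl ⟨hx, h⟩
        · rcases lt_or_ge x 1 with h' | h'
          · exact Or.inr (Or.inl ⟨h, h'⟩)
          · exact Or.inr (Or.inr h')
      · rintro (⟨h, _⟩ | ⟨⟨h, _⟩ | h⟩)
        · exact h
        · linarith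
        · linarith
    have hdisj1 : Disjoint (Set.Ioo (0:ℝ) (Real.exp (-1)))
        (Set.Ico (Real.exp (-1)) 1 ∪ Set.Ici 1) := by
      rw [Set.disjoint_left]
      rintro x ⟨_, hx2⟩ (⟨h, _⟩ | h)
      · linarith
      · have h1 : (1:ℝ) ≤ x := h
        linarith
    have hdisj2 : Disjoint (Set.Ico (Real.exp (-1)) 1) (Set.Ici (1:ℝ)) := by
      rw [Set.disjoint_left]
      rintro x ⟨_, hx2⟩ h
      exact absurd h (not_le.2 hx2)
    rw [hsplit, lintegral_union (measurableSet_Ico.union measurableSet_Ici) hdisj1,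
      lintegral_union measurableSet_Ici hdisj2] at hlayer
    -- part C : vanishing on Ici 1
    have hC : (∫⁻ s in Set.Ici (1:ℝ), volume {ξ | s < Real.exp (-t * ψ ξ)}) = 0 := by
      rw [setLIntegral_congr_fun measurableSet_Ici
        (fun s hs => ?_), lintegral_zero]
      have : {ξ : EuclideanSpace ℝ (Fin n) | s < Real.exp (-t * ψ ξ)} = ∅ := by
        apply Set.eq_empty_iff_forall_notMem.2
        intro ξ hξ
        have h1 : Real.exp (-t * ψ ξ) ≤ 1 :=
          Real.exp_le_one_iff.2 (by nlinarith [hpos ξ])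
        have := lt_of_le_of_lt (le_trans h1 hs) hξ
        exact lt_irrefl _ this
      rw [this, measure_empty]
    -- part B : middle interval
    have hB : (∫⁻ s in Set.Ico (Real.exp (-1)) 1, volume {ξ | s < Real.exp (-t * ψ ξ)}) ≤
        ENNReal.ofReal (1 - Real.exp (-1)) * M := by
      have hb : ∀ s ∈ Set.Ico (Real.exp (-1)) 1,
          volume {ξ : EuclideanSpace ℝ (Fin n) | s < Real.exp (-t * ψ ξ)} ≤ M := by
        intro s hs
        apply measure_mono
        intro ξ hξ
        have hlog : Real.log s < -t * ψ ξ := by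
          have hs0 : 0 < s := lt_of_lt_of_le he1 hs.1
          exact (Real.log_lt_iff_lt_exp hs0).2 hξ
        have hlog2 : (-1:ℝ) ≤ Real.log s := by
          have := Real.log_le_log he1 hs.1
          simpa using this
        show ψ ξ < 1 / t
        rw [lt_div_iff₀ ht]
        nlinarith
      calc (∫⁻ s in Set.Ico (Real.exp (-1)) 1, volume {ξ | s < Real.exp (-t * ψ ξ)})
          ≤ ∫⁻ _ in Set.Ico (Real.exp (-1)) 1, M := setLIntegral_mono' measurableSet_Ico hb
        _ = M * volume (Set.Ico (Real.exp (-1)) 1) := setLIntegral_const _ _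
        _ = ENNReal.ofReal (1 - Real.exp (-1)) * M := by
            rw [Real.volume_Ico, mul_comm]
    -- part A : small s
    have hA : (∫⁻ s in Set.Ioo 0 (Real.exp (-1)), volume {ξ | s < Real.exp (-t * ψ ξ)}) ≤
        ENNReal.ofReal (γ₀ * J) * M := by
      have hb : ∀ s ∈ Set.Ioo (0:ℝ) (Real.exp (-1)),
          volume {ξ : EuclideanSpace ℝ (Fin n) | s < Real.exp (-t * ψ ξ)} ≤
            ENNReal.ofReal (γ₀ * (-Real.log s) ^ (α/2)) * M := by
        intro s hs
        obtain ⟨hs0, hs1⟩ := hs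
        set L : ℝ := -Real.log s with hLdef
        have hL1 : 1 < L := by
          have := (Real.log_lt_iff_lt_exp hs0).2 hs1
          simp only [hLdef]; linarith
        have hL0 : (0:ℝ) ≤ L := by linarith
        have hc1 : 1 ≤ Real.sqrt L := by
          rw [show (1:ℝ) = Real.sqrt 1 from Real.sqrt_one.symm]
          exact Real.sqrt_le_sqrt hL1.le
        have hr0 : (0:ℝ) < Real.sqrt (1/t) := Real.sqrt_pos.2 (by positivity)
        have hsq1 : Real.sqrt L ^ 2 = L := Real.sq_sqrt hL0
        have hsq2 : Real.sqrt (1/t) ^ 2 = 1/t := Real.sq_sqrt (by positivity)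
        have hset : {ξ : EuclideanSpace ℝ (Fin n) | s < Real.exp (-t * ψ ξ)} =
            {ξ : EuclideanSpace ℝ (Fin n) | ψ ξ < Real.sqrt L ^ 2 * Real.sqrt (1/t) ^ 2} := by
          ext ξ
          simp only [Set.mem_setOf_eq, hsq1, hsq2]
          rw [← Real.log_lt_iff_lt_exp hs0]
          constructor
          · intro h
            rw [mul_one_div, lt_div_iff₀ ht]
            nlinarith
          · intro h
            rw [mul_one_div, lt_div_iff₀ ht] at h
            nlinarith
        have hpow : Real.sqrt L ^ α = L ^ (α/2) := by
          rw [Real.sqrt_eq_rpow, ← Real.rpow_mul hL0]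
          congr 1; ring
        have hset2 : {ξ : EuclideanSpace ℝ (Fin n) | ψ ξ < Real.sqrt (1/t) ^ 2} = S := by
          simp only [hsq2, hS]
        calc volume {ξ : EuclideanSpace ℝ (Fin n) | s < Real.exp (-t * ψ ξ)}
            = volume {ξ : EuclideanSpace ℝ (Fin n) |
                ψ ξ < Real.sqrt L ^ 2 * Real.sqrt (1/t) ^ 2} := by rw [hset]
          _ ≤ ENNReal.ofReal (γ₀ * Real.sqrt L ^ α) *
                volume {ξ : EuclideanSpace ℝ (Fin n) | ψ ξ < Real.sqrt (1/t) ^ 2} :=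
              hdoub _ hc1 _ hr0
          _ = ENNReal.ofReal (γ₀ * L ^ (α/2)) * M := by rw [hpow, hset2]
      have hmg : Measurable fun s : ℝ => ENNReal.ofReal (γ₀ * (-Real.log s) ^ (α/2)) :=
        ENNReal.measurable_ofReal.comp
          ((Real.measurable_log.neg.pow_const _).const_mul γ₀)
      have hIntOn : IntegrableOn (fun s : ℝ => γ₀ * (-Real.log s) ^ (α/2))
          (Set.Ioo 0 (Real.exp (-1))) := (aux_intOn α hα).const_mul γ₀
      have hnn : 0 ≤ᵐ[volume.restrict (Set.Ioo 0 (Real.exp (-1)))]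
          fun s : ℝ => γ₀ * (-Real.log s) ^ (α/2) := by
        refine (ae_restrict_iff' measurableSet_Ioo).2 (ae_of_all _ fun s hs => ?_)
        have hls : Real.log s < 0 :=
          Real.log_neg hs.1 (lt_trans hs.2 he2)
        exact mul_nonneg (by linarith) (Real.rpow_nonneg (by linarith) _)
      calc (∫⁻ s in Set.Ioo 0 (Real.exp (-1)), volume {ξ | s < Real.exp (-t * ψ ξ)})
          ≤ ∫⁻ s in Set.Ioo 0 (Real.exp (-1)),
              ENNReal.ofReal (γ₀ * (-Real.log s) ^ (α/2)) * M :=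
            setLIntegral_mono' measurableSet_Ioo hb
        _ = (∫⁻ s in Set.Ioo 0 (Real.exp (-1)),
              ENNReal.ofReal (γ₀ * (-Real.log s) ^ (α/2))) * M :=
            lintegral_mul_const _ hmg
        _ = ENNReal.ofReal (∫ s in Set.Ioo 0 (Real.exp (-1)),
              γ₀ * (-Real.log s) ^ (α/2)) * M := by
            rw [← ofReal_integral_eq_lintegral_ofReal hIntOn hnn]
        _ = ENNReal.ofReal (γ₀ * J) * M := by
            rw [integral_const_mul, aux_cov]
    -- combine
    have hI : (∫⁻ ξ, ENNReal.ofReal (Real.exp (-t * ψ ξ))) ≤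
        ENNReal.ofReal (1 - Real.exp (-1) + γ₀ * J) * M := by
      rw [hlayer, hC, add_zero]
      calc _ ≤ ENNReal.ofReal (γ₀ * J) * M + ENNReal.ofReal (1 - Real.exp (-1)) * M :=
            add_le_add hA hB
        _ = ENNReal.ofReal (1 - Real.exp (-1) + γ₀ * J) * M := by
            rw [← add_mul, ← ENNReal.ofReal_add (by nlinarith) (by linarith), add_comm]
    rw [hrepr]
    calc (∫⁻ ξ, ENNReal.ofReal (Real.exp (-t * ψ ξ))).toReal
        ≤ (ENNReal.ofReal (1 - Real.exp (-1) + γ₀ * J) * M).toReal :=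
          ENNReal.toReal_mono (ENNReal.mul_ne_top ENNReal.ofReal_ne_top hfin.ne) hI
      _ = (1 - Real.exp (-1) + γ₀ * J) * M.toReal := by
          rw [ENNReal.toReal_mul, ENNReal.toReal_ofReal hκ0]
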